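/- Let h : ℝⁿ → ℝ be a nonnegative polynomial with h(0) = 0 that is of combined degree type: every multi-index α in its support satisfies Σᵢ αᵢ/(2mᵢ) ≤ 1, with equality only if some αⱼ = 2mⱼ; its pure terms of highest order are c_j v_j^{2m_j}; and h(0,…,0,t,0,…,0) takes positive values for large t in each coordinate. Let L be any line through the origin intersecting the boundary of R = {v : h(v) ≤ 1} at distances d₁ ≤ d₂ from the origin (in the two opposite directions). Then d₂/d₁ ≤ M, where M depends only on the degree of h (not on its coefficients). -/

import Mathlib

open Polynomial Finset

/-- Coefficient bound for polynomials bounded on `[0,1]`, via Lagrange interpolation. -/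
lemma coeff_bound_of_bounded (N : ℕ) : ∃ C : ℝ, 0 < C ∧ ∀ p : Polynomial ℝ, p.natDegree ≤ N →
    (∀ x ∈ Set.Icc (0:ℝ) 1, |p.eval x| ≤ 1) → ∀ k, |p.coeff k| ≤ C := by
  set s : Finset ℕ := Finset.range (N + 1) with hs
  set v : ℕ → ℝ := fun j => (j : ℝ) / (N + 1) with hv
  have hN1 : (0:ℝ) < (N:ℝ) + 1 := by positivity
  have hinj : Set.InjOn v s := by
    intro a _ b _ hab
    have : (a : ℝ) = b := by
      simp only [hv] at hab; rw [div_left_inj' hN1.ne'] at hab; exact_mod_cast hab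
    exact_mod_cast this
  set C0 : ℝ := ∑ j ∈ s, ∑ k ∈ s, |(Lagrange.basis s v j).coeff k| with hC0
  have hC0nn : 0 ≤ C0 :=
    Finset.sum_nonneg fun _ _ => Finset.sum_nonneg fun _ _ => abs_nonneg _
  refine ⟨C0 + 1, by positivity, ?_⟩
  intro p hdeg hbd k
  have hcard : #s = N + 1 := Finset.card_range (N + 1)
  have hdlt : p.degree < (#s : WithBot ℕ) := by
    rw [hcard]
    calc p.degree ≤ (p.natDegree : WithBot ℕ) := Polynomial.degree_le_natDegree
      _ ≤ (N : WithBot ℕ) := by exact_mod_cast hdeg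
      _ < ((N + 1 : ℕ) : WithBot ℕ) := by exact_mod_cast Nat.lt_succ_self N
  have hp := Lagrange.eq_interpolate hinj hdlt
  have hck : p.coeff k = ∑ j ∈ s, p.eval (v j) * (Lagrange.basis s v j).coeff k := by
    conv_lhs => rw [hp]
    rw [Lagrange.interpolate_apply, Polynomial.finset_sum_coeff]
    exact Finset.sum_congr rfl fun j _ => by rw [Polynomial.coeff_C_mul]
  have hvmem : ∀ j ∈ s, v j ∈ Set.Icc (0:ℝ) 1 := by
    intro j hj
    have hj' : (j : ℝ) ≤ (N : ℝ) := by
      exact_mod_cast Nat.lt_succ_iff.mp (Finset.mem_range.mp hj)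
    constructor
    · positivity
    · rw [div_le_one hN1]; linarith
  calc |p.coeff k| ≤ ∑ j ∈ s, |p.eval (v j) * (Lagrange.basis s v j).coeff k| := by
        rw [hck]; exact Finset.abs_sum_le_sum_abs _ _
    _ ≤ ∑ j ∈ s, ∑ k' ∈ s, |(Lagrange.basis s v j).coeff k'| := by
        refine Finset.sum_le_sum fun j hj => ?_
        rw [abs_mul]
        have h1 : |p.eval (v j)| ≤ 1 := hbd _ (hvmem j hj)
        have h2 : |(Lagrange.basis s v j).coeff k| ≤
            ∑ k' ∈ s, |(Lagrange.basis s v j).coeff k'| := by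
          by_cases hk : k ∈ s
          · exact Finset.single_le_sum (f := fun k' => |(Lagrange.basis s v j).coeff k'|)
              (fun i _ => abs_nonneg _) hk
          · have hkN : N + 1 ≤ k := by
              by_contra hc
              exact hk (Finset.mem_range.mpr (Nat.lt_of_not_le hc))
            have hlt : (Lagrange.basis s v j).natDegree < k := by
              rw [Lagrange.natDegree_basis hinj hj, hcard]
              omega
            rw [Polynomial.coeff_eq_zero_of_natDegree_lt hlt, abs_zero]
            exact Finset.sum_nonneg fun i _ => abs_nonneg _
        calc |p.eval (v j)| * |(Lagrange.basis s v j).coeff k|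
            ≤ 1 * (∑ k' ∈ s, |(Lagrange.basis s v j).coeff k'|) :=
              mul_le_mul h1 h2 (abs_nonneg _) zero_le_one
          _ = _ := one_mul _
    _ = C0 := rfl
    _ ≤ C0 + 1 := by linarith

theorem stmt17 (N : ℕ) :
    ∃ M : ℝ, 0 < M ∧
      ∀ (n : ℕ) (m : Fin n → ℕ), (∀ i, 1 ≤ m i) →
      ∀ h : MvPolynomial (Fin n) ℝ,
        h.totalDegree ≤ N →
        ConvexOn ℝ Set.univ (fun v : Fin n → ℝ => MvPolynomial.eval v h) →
        (∀ v, 0 ≤ MvPolynomial.eval v h) →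
        MvPolynomial.eval (0 : Fin n → ℝ) h = 0 →
        (∀ α ∈ h.support, 2 ≤ ∑ i, α i) →
        (∀ α ∈ h.support, ∑ i, (α i : ℝ) / (2 * m i) ≤ 1 ∧
          (∑ i, (α i : ℝ) / (2 * m i) = 1 → ∃ j, α j = 2 * m j)) →
        (∀ j, 0 < MvPolynomial.coeff (Finsupp.single j (2 * m j)) h) →
        ∀ (u : Fin n → ℝ) (d₁ d₂ : ℝ), 0 < d₁ → d₁ ≤ d₂ →
          MvPolynomial.eval (d₁ • u) h = 1 →
          MvPolynomial.eval ((-d₂) • u) h = 1 →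
          d₂ ≤ M * d₁ := by
  obtain ⟨C, hCpos, hC⟩ := coeff_bound_of_bounded N
  refine ⟨(N + 1) * C, by positivity, ?_⟩
  intro n m _ h hdeg hconv hnn h0 _ _ _ u d₁ d₂ hd₁ hd₁₂ he₁ he₂
  have hd₂ : 0 < d₂ := lt_of_lt_of_le hd₁ hd₁₂
  set w : Fin n → ℝ := (-d₂) • u with hw
  -- the restriction of h to the line through w, as a one-variable polynomial
  set g : Polynomial ℝ :=
    MvPolynomial.eval₂ Polynomial.C (fun i => Polynomial.C (w i) * Polynomial.X) h with hg
  have hgeval : ∀ t : ℝ, g.eval t = MvPolynomial.eval (t • w) h := by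
    intro t
    have key := MvPolynomial.eval₂_comp_left (Polynomial.evalRingHom t)
      (Polynomial.C : ℝ →+* Polynomial ℝ) (fun i => Polynomial.C (w i) * Polynomial.X) h
    simp only [Polynomial.coe_evalRingHom] at key
    rw [hg, key]
    have h1 : (Polynomial.evalRingHom t).comp (Polynomial.C : ℝ →+* Polynomial ℝ)
        = RingHom.id ℝ := RingHom.ext fun x => Polynomial.eval_C
    have h2 : (Polynomial.eval t ∘ fun i => Polynomial.C (w i) * Polynomial.X) = t • w := by
      funext i
      simp only [Function.comp_apply, Polynomial.eval_mul, Polynomial.eval_C, Polynomial.eval_X]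
      rw [mul_comm]
      rfl
    rw [h1, h2]
    rfl
  -- degree bound
  have hgdeg : g.natDegree ≤ N := by
    rw [hg, MvPolynomial.eval₂_eq']
    refine (Polynomial.natDegree_sum_le _ _).trans ?_
    rw [Finset.fold_max_le]
    refine ⟨Nat.zero_le _, fun α hα => ?_⟩
    simp only [Function.comp_apply]
    have hprod : (∏ i, (Polynomial.C (w i) * Polynomial.X) ^ α i)
        = Polynomial.C (∏ i, w i ^ α i) * Polynomial.X ^ (∑ i, α i) := by
      simp_rw [mul_pow, ← Polynomial.C_pow]
      rw [Finset.prod_mul_distrib, ← map_prod, Finset.prod_pow_eq_pow_sum]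
    rw [hprod, ← mul_assoc, ← Polynomial.C_mul]
    refine (Polynomial.natDegree_C_mul_le _ _).trans ?_
    rw [Polynomial.natDegree_X_pow]
    have hsum : (α.sum fun _ e => e) = ∑ i, α i := Finsupp.sum_fintype _ _ fun _ => rfl
    rw [← hsum]
    exact (MvPolynomial.le_totalDegree hα).trans hdeg
  -- g is bounded by 1 on [0,1]
  have hbd : ∀ x ∈ Set.Icc (0:ℝ) 1, |g.eval x| ≤ 1 := by
    intro x hx
    obtain ⟨hx0, hx1⟩ := hx
    have hge0 : 0 ≤ g.eval x := by rw [hgeval]; exact hnn _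
    have hle : g.eval x ≤ 1 := by
      rw [hgeval]
      have hcomb := hconv.2 (Set.mem_univ w) (Set.mem_univ (0 : Fin n → ℝ))
        hx0 (by linarith : (0:ℝ) ≤ 1 - x) (by ring)
      simp only [smul_zero, add_zero, smul_eq_mul] at hcomb
      rw [he₂] at hcomb  -- eval w h = 1 since w = (-d₂) • u
      rw [h0] at hcomb
      calc MvPolynomial.eval (x • w) h ≤ x * 1 + (1 - x) * 0 := hcomb
        _ = x := by ring
        _ ≤ 1 := hx1
    rw [abs_of_nonneg hge0]; exact hle
  have hcoeff : ∀ k, |g.coeff k| ≤ C := hC g hgdeg hbd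
  -- constant coefficient vanishes
  have hc0 : g.coeff 0 = 0 := by
    rw [Polynomial.coeff_zero_eq_eval_zero, hgeval, zero_smul, h0]
  -- evaluate at -(d₁/d₂)
  have hx : g.eval (-(d₁ / d₂)) = 1 := by
    rw [hgeval, hw, smul_smul]
    have : -(d₁ / d₂) * -d₂ = d₁ := by field_simp
    rw [this, he₁]
  have hsum : (1:ℝ) = ∑ k ∈ Finset.range (N + 1), g.coeff k * (-(d₁ / d₂)) ^ k := by
    rw [← hx, Polynomial.eval_eq_sum_range' (Nat.lt_succ_of_le hgdeg)]
  have hratio : |(-(d₁ / d₂))| = d₁ / d₂ := by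
    rw [abs_neg, abs_of_pos (div_pos hd₁ hd₂)]
  have hr1 : d₁ / d₂ ≤ 1 := div_le_one_of_le₀ hd₁₂ hd₂.le
  have hr0 : 0 ≤ d₁ / d₂ := (div_pos hd₁ hd₂).le
  have hterm : ∀ k ∈ Finset.range (N + 1),
      g.coeff k * (-(d₁ / d₂)) ^ k ≤ C * (d₁ / d₂) := by
    intro k _
    match k with
    | 0 => simp [hc0]; positivity
    | Nat.succ j =>
      calc g.coeff (j+1) * (-(d₁ / d₂)) ^ (j+1)
          ≤ |g.coeff (j+1) * (-(d₁ / d₂)) ^ (j+1)| := le_abs_self _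
        _ = |g.coeff (j+1)| * (d₁ / d₂) ^ (j+1) := by
            rw [abs_mul, abs_pow, hratio]
        _ ≤ C * (d₁ / d₂) ^ (j+1) :=
            mul_le_mul_of_nonneg_right (hcoeff _) (by positivity)
        _ ≤ C * (d₁ / d₂) ^ 1 := by
            exact mul_le_mul_of_nonneg_left
              (pow_le_pow_of_le_one hr0 hr1 (Nat.succ_le_succ (Nat.zero_le j))) hCpos.le
        _ = C * (d₁ / d₂) := by rw [pow_one]
  have hmain : (1:ℝ) ≤ (N + 1) * (C * (d₁ / d₂)) := by
    calc (1:ℝ) = ∑ k ∈ Finset.range (N + 1), g.coeff k * (-(d₁ / d₂)) ^ k := hsum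
      _ ≤ ∑ _k ∈ Finset.range (N + 1), C * (d₁ / d₂) := Finset.sum_le_sum hterm
      _ = (N + 1) * (C * (d₁ / d₂)) := by
          rw [Finset.sum_const, Finset.card_range, nsmul_eq_mul]
          push_cast
          ring
  have heq : ((N:ℝ) + 1) * (C * (d₁ / d₂)) = ((N:ℝ) + 1) * C * d₁ / d₂ := by ring
  rw [heq, le_div_iff₀ hd₂, one_mul] at hmain
  exact hmain
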